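/- Let A ∈ ℝ^{n×n}, B ∈ ℝ^{n×u}, C ∈ ℝ^{y×n}, B₁ ∈ ℝ^{n×w}, C₁ ∈ ℝ^{z×n}, D₁₁ ∈ ℝ^{z×w}, D₁₂ ∈ ℝ^{z×u}, K ∈ ℝ^{u×y}, Q ∈ 𝕊ₙ, and γ ∈ ℝ. Define A_cl = A + B·K·C and C_cl = C₁ + D₁₂·K·C. Assume B₁·B₁ᵀ is positive definite, D₁₁ ≠ 0, and the symmetric 4×4 block matrix [[−Q, 0, 0, 0], [0, A_cl·Q + Q·A_clᵀ, (C_cl·Q)ᵀ, B₁], [0, C_cl·Q, −γ·I, D₁₁], [0, B₁ᵀ, D₁₁ᵀ, −γ·I]] is negative semidefinite. Then: (i) γ > 0; (ii) A_cl·Q + Q·A_clᵀ + γ⁻¹·B₁·B₁ᵀ is negative semidefinite; (iii) Q is positive definite; and (iv) every complex eigenvalue of A_cl has strictly negative real part. -/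

import Mathlib

open Matrix

private lemma bmi_key {n w z : ℕ}
    (S : Matrix (Fin n) (Fin n) ℝ) (B₁ : Matrix (Fin n) (Fin w) ℝ)
    (Ccl : Matrix (Fin z) (Fin n) ℝ) (D₁₁ : Matrix (Fin z) (Fin w) ℝ)
    (Q : Matrix (Fin n) (Fin n) ℝ) (γ : ℝ)
    (h : (-(fromBlocks (-Q) 0 0
        (fromBlocks S (fromCols Cclᵀ B₁) (fromRows Ccl B₁ᵀ)
          (fromBlocks (-(γ • (1 : Matrix (Fin z) (Fin z) ℝ))) D₁₁
            D₁₁ᵀ (-(γ • (1 : Matrix (Fin w) (Fin w) ℝ))))))).PosSemidef)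
    (x₀ x₁ : Fin n → ℝ) (x₂ : Fin z → ℝ) (x₃ : Fin w → ℝ) :
    x₁ ⬝ᵥ (S *ᵥ x₁) + x₁ ⬝ᵥ (Cclᵀ *ᵥ x₂) + x₁ ⬝ᵥ (B₁ *ᵥ x₃)
      + x₂ ⬝ᵥ (Ccl *ᵥ x₁) + x₂ ⬝ᵥ (D₁₁ *ᵥ x₃)
      + x₃ ⬝ᵥ (B₁ᵀ *ᵥ x₁) + x₃ ⬝ᵥ (D₁₁ᵀ *ᵥ x₂)
      ≤ x₀ ⬝ᵥ (Q *ᵥ x₀) + γ * (x₂ ⬝ᵥ x₂) + γ * (x₃ ⬝ᵥ x₃) := by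
  have := h.dotProduct_mulVec_nonneg (Sum.elim x₀ (Sum.elim x₁ (Sum.elim x₂ x₃)))
  simp only [star_trivial, neg_mulVec, dotProduct_neg, fromBlocks_mulVec,
    fromRows_mulVec, fromCols_mulVec_sumElim, sumElim_dotProduct_sumElim,
    Sum.elim_comp_inl, Sum.elim_comp_inr, zero_mulVec, mulVec_zero,
    add_zero, zero_add, smul_mulVec, one_mulVec, dotProduct_add, dotProduct_smul,
    smul_eq_mul, dotProduct_zero, zero_dotProduct, sumElim_dotProduct_sumElim] at this
  linarith

private lemma re_quad {n : ℕ} (M : Matrix (Fin n) (Fin n) ℝ) (v : Fin n → ℂ) :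
    (star v ⬝ᵥ (M.map (algebraMap ℝ ℂ)) *ᵥ v).re
      = (fun i => (v i).re) ⬝ᵥ (M *ᵥ fun i => (v i).re)
        + (fun i => (v i).im) ⬝ᵥ (M *ᵥ fun i => (v i).im) := by
  simp only [dotProduct, mulVec, map_apply, Pi.star_apply, Complex.star_def,
    Complex.re_sum, Finset.mul_sum, Complex.mul_re, Complex.conj_re, Complex.conj_im,
    Complex.ofReal_re, Complex.ofReal_im]
  rw [← Finset.sum_add_distrib]
  refine Finset.sum_congr rfl fun i _ => ?_
  rw [← Finset.sum_add_distrib]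
  refine Finset.sum_congr rfl fun j _ => ?_
  simp only [Complex.mul_im, Complex.mul_re, Complex.coe_algebraMap,
    Complex.ofReal_re, Complex.ofReal_im]
  ring

/-- Proposition 2 (H∞ design): feasibility of the BMI constraint
`[[-Q, 0, 0, 0], [0, A_cl Q + Q A_clᵀ, (C_cl Q)ᵀ, B₁], [0, C_cl Q, -γ I, D₁₁], [0, B₁ᵀ, D₁₁ᵀ, -γ I]] ⪯ 0`
with `B₁ B₁ᵀ ≻ 0` and `D₁₁ ≠ 0` implies `γ > 0`,
`A_cl Q + Q A_clᵀ + γ⁻¹ B₁ B₁ᵀ ⪯ 0`, `Q ≻ 0`, and the closed-loop matrix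
`A_cl = A + B K C` is Hurwitz. -/
theorem hinf_bmi_feasibility {n u y w z : ℕ}
    (A : Matrix (Fin n) (Fin n) ℝ) (B : Matrix (Fin n) (Fin u) ℝ)
    (C : Matrix (Fin y) (Fin n) ℝ) (B₁ : Matrix (Fin n) (Fin w) ℝ)
    (C₁ : Matrix (Fin z) (Fin n) ℝ) (D₁₁ : Matrix (Fin z) (Fin w) ℝ)
    (D₁₂ : Matrix (Fin z) (Fin u) ℝ) (K : Matrix (Fin u) (Fin y) ℝ)
    (Q : Matrix (Fin n) (Fin n) ℝ) (γ : ℝ)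
    (hQ : Q.IsSymm) (hB₁ : (B₁ * B₁ᵀ).PosDef) (hD₁₁ : D₁₁ ≠ 0)
    (h : (-(fromBlocks
        (-Q) 0 0
        (fromBlocks
          ((A + B * K * C) * Q + Q * (A + B * K * C)ᵀ)
          (fromCols ((C₁ + D₁₂ * K * C) * Q)ᵀ B₁)
          (fromRows ((C₁ + D₁₂ * K * C) * Q) B₁ᵀ)
          (fromBlocks (-(γ • (1 : Matrix (Fin z) (Fin z) ℝ))) D₁₁
            D₁₁ᵀ (-(γ • (1 : Matrix (Fin w) (Fin w) ℝ))))))).PosSemidef) :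
    0 < γ ∧
    (-((A + B * K * C) * Q + Q * (A + B * K * C)ᵀ + γ⁻¹ • (B₁ * B₁ᵀ))).PosSemidef ∧
    Q.PosDef ∧
    (∀ μ ∈ spectrum ℂ ((A + B * K * C).map (algebraMap ℝ ℂ)), μ.re < 0) := by
  have key := bmi_key _ _ _ _ _ _ h
  set Acl := A + B * K * C with hAcl
  set S := Acl * Q + Q * Aclᵀ with hS
  set X := B₁ * B₁ᵀ with hX
  have hQt : Qᵀ = Q := hQ
  -- D₁₁ has a nonzero entry
  obtain ⟨i0, j0, hd⟩ : ∃ i j, D₁₁ i j ≠ 0 := by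
    by_contra hc
    push_neg at hc
    exact hD₁₁ (Matrix.ext fun i j => by simpa using hc i j)
  -- γ ≥ 0
  have hγ0 : 0 ≤ γ := by
    have := key 0 0 0 (Pi.single j0 1)
    simpa using this
  -- γ > 0
  have hγ : 0 < γ := by
    rcases hγ0.lt_or_eq with hlt | heq
    · exact hlt
    · exfalso
      have := key 0 0 (Pi.single i0 (D₁₁ i0 j0)) (Pi.single j0 1)
      rw [← heq] at this
      simp only [zero_dotProduct, dotProduct_zero, mulVec_zero, zero_mulVec,
        zero_add, add_zero, zero_mul, mulVec_single, single_dotProduct,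
        transpose_apply, mul_one, Pi.smul_apply, col_apply, op_smul_eq_mul, one_mul] at this
      nlinarith [mul_self_pos.mpr hd]
  have hγinv : 0 < γ⁻¹ := inv_pos.mpr hγ
  -- Hermitian facts
  have hSsym : Sᵀ = S := by
    rw [hS, transpose_add, transpose_mul, transpose_mul, transpose_transpose, hQt, add_comm]
  have hXsym : Xᵀ = X := by rw [hX, transpose_mul, transpose_transpose]
  -- part (ii)
  have hii : (-(S + γ⁻¹ • X)).PosSemidef := by
    refine PosSemidef.of_dotProduct_mulVec_nonneg ?_ ?_
    · show (-(S + γ⁻¹ • X))ᴴ = _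
      rw [conjTranspose_eq_transpose_of_trivial, transpose_neg, transpose_add,
        transpose_smul, hSsym, hXsym]
    · intro x
      have hb := key 0 x 0 (γ⁻¹ • (B₁ᵀ *ᵥ x))
      have e1 : x ⬝ᵥ (B₁ *ᵥ (B₁ᵀ *ᵥ x)) = (B₁ᵀ *ᵥ x) ⬝ᵥ (B₁ᵀ *ᵥ x) := by
        rw [dotProduct_mulVec, ← mulVec_transpose]
      simp only [zero_dotProduct, dotProduct_zero, mulVec_zero, zero_mulVec,
        zero_add, add_zero, mulVec_smul, dotProduct_smul, smul_dotProduct,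
        smul_eq_mul, e1] at hb
      have e2 : γ * (γ⁻¹ * (γ⁻¹ * ((B₁ᵀ *ᵥ x) ⬝ᵥ (B₁ᵀ *ᵥ x))))
          = γ⁻¹ * ((B₁ᵀ *ᵥ x) ⬝ᵥ (B₁ᵀ *ᵥ x)) := by
        field_simp
      rw [e2] at hb
      have e3 : X *ᵥ x = B₁ *ᵥ (B₁ᵀ *ᵥ x) := by rw [hX, ← mulVec_mulVec]
      simp only [star_trivial, neg_mulVec, dotProduct_neg, add_mulVec,
        dotProduct_add, smul_mulVec, dotProduct_smul, smul_eq_mul, e3, e1]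
      linarith
  -- S is negative definite on nonzero vectors
  have hSneg : ∀ v : Fin n → ℝ, v ≠ 0 → v ⬝ᵥ (S *ᵥ v) < 0 := by
    intro v hv
    have h1 := hii.dotProduct_mulVec_nonneg v
    simp only [star_trivial, neg_mulVec, dotProduct_neg, add_mulVec,
      dotProduct_add, smul_mulVec, dotProduct_smul, smul_eq_mul] at h1
    have h2 := hB₁.dotProduct_mulVec_pos hv
    rw [star_trivial] at h2
    nlinarith
  have hSle : ∀ v : Fin n → ℝ, v ⬝ᵥ (S *ᵥ v) ≤ 0 := by
    intro v
    by_cases hv : v = 0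
    · simp [hv]
    · exact (hSneg v hv).le
  -- part (iii)
  have hQherm : Q.IsHermitian := by
    show Qᴴ = Q
    rw [conjTranspose_eq_transpose_of_trivial, hQt]
  have hQpsd0 : ∀ v : Fin n → ℝ, 0 ≤ v ⬝ᵥ (Q *ᵥ v) := by
    intro v
    have := key v 0 0 0
    simpa using this
  have hQpsd : Q.PosSemidef := PosSemidef.of_dotProduct_mulVec_nonneg hQherm fun x => by simpa using hQpsd0 x
  have hQpd : Q.PosDef := by
    refine PosDef.of_dotProduct_mulVec_pos hQherm fun v hv => ?_
    rw [star_trivial]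
    rcases (hQpsd0 v).lt_or_eq with hlt | heq
    · exact hlt
    · exfalso
      have hz : Q *ᵥ v = 0 :=
        (hQpsd.dotProduct_mulVec_zero_iff v).mp (by simpa using heq.symm)
      have hvq : v ᵥ* Q = 0 := by rw [← mulVec_transpose, hQt, hz]
      have : v ⬝ᵥ (S *ᵥ v) = 0 := by
        rw [hS, add_mulVec, dotProduct_add, ← mulVec_mulVec, hz, mulVec_zero,
          dotProduct_zero, ← mulVec_mulVec, dotProduct_mulVec, dotProduct_mulVec, hvq,
          zero_vecMul, zero_dotProduct, add_zero]
      exact (hSneg v hv).ne this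
  refine ⟨hγ, hii, hQpd, ?_⟩
  -- part (iv): Hurwitz
  intro μ hμ
  set Aℂ := Acl.map (algebraMap ℝ ℂ) with hAC
  have hnu : ¬IsUnit (algebraMap ℂ (Matrix (Fin n) (Fin n) ℂ) μ - Aℂ) :=
    spectrum.mem_iff.mp hμ
  have hdet : (μ • (1 : Matrix (Fin n) (Fin n) ℂ) - Aℂ).det = 0 := by
    by_contra hne
    exact hnu (by
      rw [Algebra.algebraMap_eq_smul_one]
      exact (Matrix.isUnit_iff_isUnit_det _).mpr (isUnit_iff_ne_zero.mpr hne))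
  have hdetT : (μ • (1 : Matrix (Fin n) (Fin n) ℂ) - Aℂᵀ).det = 0 := by
    have : (μ • (1 : Matrix (Fin n) (Fin n) ℂ) - Aℂ)ᵀ.det = 0 := by
      rw [det_transpose]; exact hdet
    rwa [transpose_sub, transpose_smul, transpose_one] at this
  obtain ⟨v, hv0, hvv⟩ := Matrix.exists_mulVec_eq_zero_iff.mpr hdetT
  have heig : Aℂᵀ *ᵥ v = μ • v := by
    rw [sub_mulVec, sub_eq_zero] at hvv
    rw [← hvv, smul_mulVec, one_mulVec]
  -- real and imaginary parts
  set a : Fin n → ℝ := fun i => (v i).re with ha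
  set b : Fin n → ℝ := fun i => (v i).im with hb
  have hab : ¬(a = 0 ∧ b = 0) := by
    rintro ⟨h1, h2⟩
    exact hv0 (funext fun i => Complex.ext
      (by simpa using congrFun h1 i) (by simpa using congrFun h2 i))
  set q : ℂ := star v ⬝ᵥ (Q.map (algebraMap ℝ ℂ)) *ᵥ v with hq
  have hqre : 0 < q.re := by
    rw [hq, re_quad]
    rcases not_and_or.mp hab with h1 | h2
    · have := hQpd.dotProduct_mulVec_pos h1
      rw [star_trivial] at this
      have h2' := hQpsd0 b
      exact add_pos_of_pos_of_nonneg this h2'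
    · have := hQpd.dotProduct_mulVec_pos h2
      rw [star_trivial] at this
      have h1' := hQpsd0 a
      exact add_pos_of_nonneg_of_pos h1' this
  set E : ℂ := star v ⬝ᵥ (S.map (algebraMap ℝ ℂ)) *ᵥ v with hE
  have hEre : E.re < 0 := by
    rw [hE, re_quad]
    rcases not_and_or.mp hab with h1 | h2
    · exact add_neg_of_neg_of_nonpos (hSneg a h1) (hSle b)
    · exact add_neg_of_nonpos_of_neg (hSle a) (hSneg b h2)
  -- algebra: E = (μ + conj μ) * q
  have hmap : S.map (algebraMap ℝ ℂ)
      = Aℂ * Q.map (algebraMap ℝ ℂ) + Q.map (algebraMap ℝ ℂ) * Aℂᵀ := by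
    rw [hS, hAC, Matrix.map_add, Matrix.map_mul, Matrix.map_mul, Matrix.transpose_map]
    exact fun a₁ a₂ => map_add _ a₁ a₂
  have hAstar : star v ᵥ* Aℂ = (starRingEnd ℂ) μ • star v := by
    have h1 : star (Aℂᵀ *ᵥ v) = star v ᵥ* Aℂᵀᴴ := star_mulVec _ _
    have h2 : Aℂᵀᴴ = Aℂ := by
      ext i j
      simp [conjTranspose_apply, hAC, map_apply, Complex.conj_ofReal]
    rw [h2, heig, star_smul] at h1
    exact h1.symm
  have hEq : E = ((starRingEnd ℂ) μ + μ) * q := by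
    rw [hE, hq, hmap, add_mulVec, dotProduct_add, ← mulVec_mulVec, ← mulVec_mulVec,
      heig, mulVec_smul, dotProduct_smul, dotProduct_mulVec, hAstar, smul_dotProduct]
    simp only [smul_eq_mul]
    ring
  have hconj : (starRingEnd ℂ) μ + μ = ((2 * μ.re : ℝ) : ℂ) := by
    rw [add_comm]; exact Complex.add_conj μ
  have hEre2 : E.re = 2 * μ.re * q.re := by
    rw [hEq, hconj]
    simp [Complex.mul_re]
  nlinarith
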